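/- Let p < 0 and T an invertible bounded linear operator on a complex Hilbert space H. Then the map φ_{p,T}(A) = f_p((I + (TT*)⁻¹)^{1/2}(I − (I + T A T*)⁻¹)(I + (TT*)⁻¹)^{1/2}) is an order automorphism of the effect algebra [0, I]. -/

import Mathlib

set_option synthInstance.maxHeartbeats 1000000
set_option maxHeartbeats 1000000

/-- The scalar function `f_p(x) = x / (p x + 1 - p)`. -/
noncomputable def fScalar (p x : ℝ) : ℝ := x / (p * x + 1 - p)

/-- `f_p` applied to an operator via the continuous functional calculus. -/
noncomputable def fOp (p : ℝ) {H : Type*} [NormedAddCommGroup H] [InnerProductSpace ℂ H]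
    [CompleteSpace H] (A : H →L[ℂ] H) : H →L[ℂ] H :=
  cfc (fun x : ℝ => x / (p * x + 1 - p)) A

section Scalar

lemma den_pos' {p x : ℝ} (hp : p < 1) (h0 : 0 ≤ x) (h1 : x ≤ 1) : 0 < p * x + 1 - p := by
  rcases le_or_gt p 0 with h | h
  · nlinarith
  · nlinarith

lemma fS_mem' {p x : ℝ} (hp : p < 1) (h0 : 0 ≤ x) (h1 : x ≤ 1) :
    0 ≤ x / (p * x + 1 - p) ∧ x / (p * x + 1 - p) ≤ 1 := by
  have hd := den_pos' hp h0 h1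
  refine ⟨by positivity, ?_⟩
  rw [div_le_one hd]; nlinarith

lemma fS_comp' {p x : ℝ} (hp : p < 1) (h0 : 0 ≤ x) (h1 : x ≤ 1) :
    (x / (p * x + 1 - p)) / ((p / (p - 1)) * (x / (p * x + 1 - p)) + 1 - p / (p - 1)) = x := by
  have hd := (den_pos' hp h0 h1).ne'
  have h1' : p - 1 ≠ 0 := by intro h; apply absurd hp; simp [show p = 1 by linarith]
  have key : (p / (p - 1)) * (x / (p * x + 1 - p)) + 1 - p / (p - 1) = 1 / (p * x + 1 - p) := by
    field_simp
    ring
  rw [key]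
  rw [one_div, div_inv_eq_mul, div_mul_cancel₀ x hd]

lemma q_lt_one' {p : ℝ} (hp : p < 1) : p / (p - 1) < 1 := by
  have h1 : p - 1 < 0 := by linarith
  have h2 : p / (p - 1) = 1 + 1 / (p - 1) := by rw [eq_comm, add_div' _ _ _ h1.ne]; ring_nf
  rw [h2]
  have := one_div_neg.mpr h1
  linarith

end Scalar

section Abstract

variable {A : Type*} [CStarAlgebra A] [PartialOrder A] [StarOrderedRing A]

lemma spec_sub' {d : A} (hd0 : 0 ≤ d) (hd1 : d ≤ 1) : spectrum ℝ d ⊆ Set.Icc 0 1 := by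
  intro x hx
  refine ⟨spectrum_nonneg_of_nonneg hd0 hx, ?_⟩
  exact (le_algebraMap_iff_spectrum_le (R := ℝ) (a := d) (r := 1)).mp (by simpa using hd1) x hx

lemma fA_cont' {p : ℝ} (hp : p < 1) {d : A} (hd0 : 0 ≤ d) (hd1 : d ≤ 1) :
    ContinuousOn (fun x : ℝ => x / (p * x + 1 - p)) (spectrum ℝ d) := by
  apply ContinuousOn.div continuousOn_id (by fun_prop)
  intro x hx
  obtain ⟨h0, h1⟩ := spec_sub' hd0 hd1 hx
  exact (den_pos' hp h0 h1).ne'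

lemma affine_cfc' {p : ℝ} {d : A} (hsa : IsSelfAdjoint d) :
    cfc (fun x : ℝ => p * x + 1 - p) d = p • d + (1 - p) • 1 := by
  have : (fun x : ℝ => p * x + 1 - p) = fun x : ℝ => p * (id x) + (1 - p) * 1 := by
    funext x; simp; ring
  rw [this, cfc_add _ _ _ (by fun_prop) (by fun_prop)]
  rw [cfc_const_mul _ _ _ (by fun_prop), cfc_const_mul _ _ _ (by fun_prop)]
  rw [cfc_id ℝ d, cfc_const 1 d]
  simp [Algebra.algebraMap_eq_smul_one]

lemma fA_eq' {p : ℝ} (hp : p < 1) (hp0 : p ≠ 0) {d : A} (hd0 : 0 ≤ d) (hd1 : d ≤ 1) :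
    cfc (fun x : ℝ => x / (p * x + 1 - p)) d
      = (1 / p) • (1 : A) - ((1 - p) / p) • Ring.inverse (p • d + (1 - p) • 1) := by
  have hsa : IsSelfAdjoint d := .of_nonneg hd0
  have hne : ∀ x ∈ spectrum ℝ d, p * x + 1 - p ≠ 0 := fun x hx =>
    (den_pos' hp (spec_sub' hd0 hd1 hx).1 (spec_sub' hd0 hd1 hx).2).ne'
  have step1 : cfc (fun x : ℝ => x / (p * x + 1 - p)) d
      = cfc (fun x : ℝ => 1 / p - ((1 - p) / p) * (p * x + 1 - p)⁻¹) d := by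
    apply cfc_congr
    intro x hx
    have h := hne x hx
    field_simp
    have h2 : 1 + x * p - p ≠ 0 := by contrapose! h; linarith
    linear_combination inv_mul_cancel₀ h2
  have hcont : ContinuousOn (fun x : ℝ => (p * x + 1 - p)⁻¹) (spectrum ℝ d) :=
    ContinuousOn.inv₀ (by fun_prop) hne
  rw [step1, cfc_sub _ _ _ (by fun_prop) (by exact hcont.const_smul ((1-p)/p))]
  have hinv : cfc (fun x : ℝ => (p * x + 1 - p)⁻¹) d
      = Ring.inverse (cfc (fun x : ℝ => p * x + 1 - p) d) :=
    cfc_inv _ d hne (by fun_prop) hsa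
  rw [cfc_const_mul _ _ _ hcont, cfc_const (1/p) d, hinv, affine_cfc' hsa,
    Algebra.algebraMap_eq_smul_one]

lemma ring_inverse_antitone' {x y : A} (hx : IsUnit x) (h0 : 0 ≤ x) (hxy : x ≤ y) :
    Ring.inverse y ≤ Ring.inverse x := by
  have hy : IsUnit y := CStarAlgebra.isUnit_of_le _ hxy (hx.isStrictlyPositive h0)
  lift x to Aˣ using hx
  lift y to Aˣ using hy
  rw [Ring.inverse_unit, Ring.inverse_unit]
  exact CStarAlgebra.inv_le_inv h0 hxy

lemma ring_inverse_nonneg' {x : A} (hx : IsUnit x) (h0 : 0 ≤ x) : 0 ≤ Ring.inverse x := by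
  lift x to Aˣ using hx
  rw [Ring.inverse_unit]
  exact CFC.inv_nonneg_of_nonneg x h0

lemma ring_inverse_inverse' {M : Type*} [MonoidWithZero M] {x : M} (hx : IsUnit x) :
    Ring.inverse (Ring.inverse x) = x := by
  lift x to Mˣ using hx
  rw [Ring.inverse_unit, Ring.inverse_unit, inv_inv]

lemma ring_inverse_isUnit' {M : Type*} [MonoidWithZero M] {x : M} (hx : IsUnit x) :
    IsUnit (Ring.inverse x) := by
  lift x to Mˣ using hx
  rw [Ring.inverse_unit]
  exact (x⁻¹).isUnit

lemma ring_inverse_le_one' {x : A} (h1 : (1 : A) ≤ x) : Ring.inverse x ≤ 1 := by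
  have := ring_inverse_antitone' isUnit_one zero_le_one h1
  rwa [Ring.inverse_one] at this

lemma affine_unit_neg' {p : ℝ} (hp : p < 0) {d : A} (hd1 : d ≤ 1) :
    (1 : A) ≤ p • d + (1 - p) • 1 := by
  have h1 : p • (1 : A) ≤ p • d := smul_le_smul_of_nonpos_left hd1 hp.le
  calc (1 : A) = p • (1 : A) + (1 - p) • 1 := by
        rw [← add_smul]; norm_num
    _ ≤ p • d + (1 - p) • 1 := add_le_add_left h1 _

lemma affine_unit_pos' {p : ℝ} (hp0 : 0 < p) {d : A} (hd0 : 0 ≤ d) :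
    ((1 - p) • 1 : A) ≤ p • d + (1 - p) • 1 :=
  le_add_of_nonneg_left (smul_nonneg hp0.le hd0)

lemma one_sub_smul_one_unit' {p : ℝ} (hp : p < 1) : IsUnit ((1 - p) • (1 : A)) := by
  rw [← Algebra.algebraMap_eq_smul_one]
  exact (isUnit_iff_ne_zero.mpr (by intro h; apply absurd hp; simp [show p = 1 by linarith])).map
    (algebraMap ℝ A)

lemma fA_mono' {p : ℝ} (hp : p < 1) (hp0 : p ≠ 0) {d e : A} (hd0 : 0 ≤ d) (hd1 : d ≤ 1)
    (he0 : 0 ≤ e) (he1 : e ≤ 1) (hde : d ≤ e) :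
    cfc (fun x : ℝ => x / (p * x + 1 - p)) d ≤ cfc (fun x : ℝ => x / (p * x + 1 - p)) e := by
  rw [fA_eq' hp hp0 hd0 hd1, fA_eq' hp hp0 he0 he1]
  apply sub_le_sub_left
  rcases lt_or_gt_of_ne hp0 with h | h
  · have hXe : (1:A) ≤ p • e + (1 - p) • 1 := affine_unit_neg' h he1
    have hle : p • e + (1 - p) • 1 ≤ p • d + (1 - p) • 1 :=
      add_le_add_left (smul_le_smul_of_nonpos_left hde h.le) _
    have hinv : Ring.inverse (p • d + (1 - p) • 1 : A) ≤ Ring.inverse (p • e + (1 - p) • 1) :=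
      ring_inverse_antitone' (CStarAlgebra.isUnit_of_le _ hXe (isUnit_one.isStrictlyPositive zero_le_one))
        (zero_le_one.trans hXe) hle
    exact smul_le_smul_of_nonpos_left hinv (div_nonpos_of_nonneg_of_nonpos (by linarith) h.le)
  · have hXd : ((1 - p) • 1 : A) ≤ p • d + (1 - p) • 1 := affine_unit_pos' h hd0
    have hle : p • d + (1 - p) • 1 ≤ p • e + (1 - p) • 1 :=
      add_le_add_left (smul_le_smul_of_nonneg_left hde h.le) _
    have hinv : Ring.inverse (p • e + (1 - p) • 1 : A) ≤ Ring.inverse (p • d + (1 - p) • 1) :=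
      ring_inverse_antitone' (CStarAlgebra.isUnit_of_le _ hXd ((one_sub_smul_one_unit' hp).isStrictlyPositive
        (smul_nonneg (by linarith) zero_le_one)))
        ((smul_nonneg (by linarith : (0:ℝ) ≤ 1 - p) zero_le_one).trans hXd) hle
    exact smul_le_smul_of_nonneg_left hinv (div_nonneg (by linarith) h.le)

lemma fA_nonneg' {p : ℝ} (hp : p < 1) {d : A} (hd0 : 0 ≤ d) (hd1 : d ≤ 1) :
    0 ≤ cfc (fun x : ℝ => x / (p * x + 1 - p)) d :=
  cfc_nonneg fun x hx => (fS_mem' hp (spec_sub' hd0 hd1 hx).1 (spec_sub' hd0 hd1 hx).2).1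

lemma fA_le_one' {p : ℝ} (hp : p < 1) {d : A} (hd0 : 0 ≤ d) (hd1 : d ≤ 1) :
    cfc (fun x : ℝ => x / (p * x + 1 - p)) d ≤ 1 :=
  cfc_le_one _ _ fun x hx => (fS_mem' hp (spec_sub' hd0 hd1 hx).1 (spec_sub' hd0 hd1 hx).2).2

lemma fA_comp' {p : ℝ}  (hp : p < 1) {d : A} (hd0 : 0 ≤ d) (hd1 : d ≤ 1) :
    cfc (fun x : ℝ => x / ((p / (p - 1)) * x + 1 - p / (p - 1)))
      (cfc (fun x : ℝ => x / (p * x + 1 - p)) d) = d := by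
  have hsa : IsSelfAdjoint d := .of_nonneg hd0
  have hq : p / (p - 1) < 1 := q_lt_one' hp
  have hf : ContinuousOn (fun x : ℝ => x / (p * x + 1 - p)) (spectrum ℝ d) :=
    fA_cont' hp hd0 hd1
  have himg : ((fun x : ℝ => x / (p * x + 1 - p)) '' spectrum ℝ d) ⊆ Set.Icc 0 1 := by
    rintro _ ⟨x, hx, rfl⟩
    obtain ⟨h0, h1⟩ := spec_sub' hd0 hd1 hx
    exact ⟨(fS_mem' hp h0 h1).1, (fS_mem' hp h0 h1).2⟩
  have hg : ContinuousOn (fun x : ℝ => x / ((p / (p - 1)) * x + 1 - p / (p - 1)))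
      ((fun x : ℝ => x / (p * x + 1 - p)) '' spectrum ℝ d) := by
    apply ContinuousOn.div continuousOn_id (by fun_prop)
    intro x hx
    exact (den_pos' hq (himg hx).1 (himg hx).2).ne'
  rw [← cfc_comp' _ _ d hg hf]
  have : cfc (fun x : ℝ => (fun y : ℝ => y / ((p / (p - 1)) * y + 1 - p / (p - 1)))
      (x / (p * x + 1 - p))) d = cfc (id : ℝ → ℝ) d := by
    apply cfc_congr
    intro x hx
    obtain ⟨h0, h1⟩ := spec_sub' hd0 hd1 hx
    exact fS_comp' hp h0 h1
  rw [this, cfc_id ℝ d]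


theorem abstract_main {A : Type*} [CStarAlgebra A] [PartialOrder A] [StarOrderedRing A]
    (p : ℝ) (hp : p < 0) (t : A) (ht : IsUnit t) :
    Set.BijOn (fun a : A =>
        cfc (fun x : ℝ => x / (p * x + 1 - p))
          (CFC.sqrt (1 + Ring.inverse (t * star t)) *
            (1 - Ring.inverse (1 + t * a * star t)) *
            CFC.sqrt (1 + Ring.inverse (t * star t))))
      {a : A | IsSelfAdjoint a ∧ 0 ≤ a ∧ a ≤ 1} {a : A | IsSelfAdjoint a ∧ 0 ≤ a ∧ a ≤ 1} ∧
    ∀ a ∈ {a : A | IsSelfAdjoint a ∧ 0 ≤ a ∧ a ≤ 1},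
      ∀ b ∈ {a : A | IsSelfAdjoint a ∧ 0 ≤ a ∧ a ≤ 1},
      (a ≤ b ↔
        cfc (fun x : ℝ => x / (p * x + 1 - p))
          (CFC.sqrt (1 + Ring.inverse (t * star t)) *
            (1 - Ring.inverse (1 + t * a * star t)) *
            CFC.sqrt (1 + Ring.inverse (t * star t))) ≤
        cfc (fun x : ℝ => x / (p * x + 1 - p))
          (CFC.sqrt (1 + Ring.inverse (t * star t)) *
            (1 - Ring.inverse (1 + t * b * star t)) *
            CFC.sqrt (1 + Ring.inverse (t * star t)))) := by
  have hp1 : p < 1 := hp.trans one_pos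
  have hq1 : p / (p - 1) < 1 := q_lt_one' hp1
  have hq0 : 0 < p / (p - 1) := div_pos_of_neg_of_neg hp (by linarith)
  have hqq : p / (p - 1) / (p / (p - 1) - 1) = p := by
    have h1 : p - 1 ≠ 0 := by linarith
    have e : p / (p - 1) - 1 = 1 / (p - 1) := by
      field_simp
      ring
    rw [e]
    field_simp
  -- basic objects
  have hr_unit : IsUnit (t * star t) := ht.mul ht.star
  set r := t * star t with hrdef
  have hr0 : 0 ≤ r := mul_star_self_nonneg t
  have hrsa : IsSelfAdjoint r := .of_nonneg hr0
  have hRinv0 : 0 ≤ Ring.inverse r := ring_inverse_nonneg' hr_unit hr0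
  set R2 := 1 + Ring.inverse r with hR2def
  have hR20 : (0:A) ≤ R2 := add_nonneg zero_le_one hRinv0
  set S := CFC.sqrt R2 with hSdef
  have hS0 : 0 ≤ S := CFC.sqrt_nonneg _
  have hSsa : IsSelfAdjoint S := .of_nonneg hS0
  have hSS : S * S = R2 := CFC.sqrt_mul_sqrt_self _ hR20
  have h1r1 : (1:A) ≤ 1 + r := le_add_of_nonneg_right hr0
  have h1r_unit : IsUnit (1 + r) := CStarAlgebra.isUnit_of_le _ h1r1 (isUnit_one.isStrictlyPositive zero_le_one)
  set D := 1 - Ring.inverse (1 + r) with hDdef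
  have e1 : R2 = Ring.inverse r * (1 + r) := by
    rw [mul_add, mul_one, Ring.inverse_mul_cancel _ hr_unit, hR2def, add_comm]
  have e2 : R2 = (1 + r) * Ring.inverse r := by
    rw [add_mul, one_mul, Ring.mul_inverse_cancel _ hr_unit, hR2def, add_comm]
  have hR2D : R2 * D = 1 := by
    rw [e1, hDdef, mul_assoc, mul_sub, mul_one, Ring.mul_inverse_cancel _ h1r_unit,
      add_sub_cancel_left, Ring.inverse_mul_cancel _ hr_unit]
  have hDR2 : D * R2 = 1 := by
    rw [e2, hDdef, ← mul_assoc, sub_mul, one_mul, Ring.inverse_mul_cancel _ h1r_unit,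
      add_sub_cancel_left, Ring.mul_inverse_cancel _ hr_unit]
  have hCommSR2 : Commute S R2 := hSS ▸ (Commute.refl S).mul_right (Commute.refl S)
  set R2u : Aˣ := ⟨R2, D, hR2D, hDR2⟩ with hR2u
  have hCommSD : Commute S D := by
    have h : Commute S (R2u : A) := hCommSR2
    exact (Commute.units_inv_right h : Commute S (↑R2u⁻¹ : A))
  have hSDS : S * D * S = 1 := by
    rw [mul_assoc, ← hCommSD.eq, ← mul_assoc, hSS, hR2D]
  set Si := D * S with hSidef
  have hSiS : Si * S = 1 := by rw [hSidef, mul_assoc, hSS, hDR2]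
  have hSSi : S * Si = 1 := by rw [hSidef, ← mul_assoc, hCommSD.eq, mul_assoc, hSS, hDR2]
  have hSiSi : Si * Si = D := by
    rw [hSidef, mul_assoc, ← mul_assoc S D S, hSDS, mul_one]
  have hDsa : IsSelfAdjoint D := by
    have h1rsa : IsSelfAdjoint (1 + r) := (IsSelfAdjoint.one A).add hrsa
    have hinv_sa : IsSelfAdjoint (Ring.inverse (1 + r)) := by
      rw [IsSelfAdjoint, ← Ring.inverse_star, h1rsa.star_eq]
    exact (IsSelfAdjoint.one A).sub hinv_sa
  have hSisa : IsSelfAdjoint Si := by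
    rw [IsSelfAdjoint, hSidef, star_mul, hSsa.star_eq, hDsa.star_eq, hCommSD.eq]
  have hD0 : 0 ≤ D := sub_nonneg.mpr (ring_inverse_le_one' h1r1)
  -- the inverse of t
  set ti : A := ↑ht.unit⁻¹ with htidef
  have htit : ti * t = 1 := ht.val_inv_mul
  have htti : t * ti = 1 := ht.mul_val_inv
  have hstar1 : star t * star ti = 1 := by rw [← star_mul, htit, star_one]
  have hstar2 : star ti * star t = 1 := by rw [← star_mul, htti, star_one]
  have htirti : ti * r * star ti = 1 := by
    rw [hrdef, ← mul_assoc, htit, one_mul, hstar1]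
  -- per-element facts for the forward map
  have hv_facts : ∀ a : A, 0 ≤ a → a ≤ 1 →
      0 ≤ 1 - Ring.inverse (1 + t * a * star t) ∧
      1 - Ring.inverse (1 + t * a * star t) ≤ D ∧
      IsUnit (1 + t * a * star t) := by
    intro a ha0 ha1
    have hc0 : 0 ≤ t * a * star t := star_right_conjugate_nonneg ha0 t
    have hcr : t * a * star t ≤ r := by
      have := star_right_conjugate_le_conjugate ha1 t
      rwa [mul_one] at this
    have hu1 : (1:A) ≤ 1 + t * a * star t := le_add_of_nonneg_right hc0
    have hu_unit : IsUnit (1 + t * a * star t) :=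
      CStarAlgebra.isUnit_of_le _ hu1 (isUnit_one.isStrictlyPositive zero_le_one)
    refine ⟨sub_nonneg.mpr (ring_inverse_le_one' hu1), ?_, hu_unit⟩
    exact sub_le_sub_left
      (ring_inverse_antitone' hu_unit (zero_le_one.trans hu1) (add_le_add_right hcr 1)) 1
  have hw_facts : ∀ a : A, 0 ≤ a → a ≤ 1 →
      0 ≤ S * (1 - Ring.inverse (1 + t * a * star t)) * S ∧
      S * (1 - Ring.inverse (1 + t * a * star t)) * S ≤ 1 := by
    intro a ha0 ha1
    obtain ⟨hv0, hvD, _⟩ := hv_facts a ha0 ha1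
    refine ⟨hSsa.conjugate_nonneg hv0, ?_⟩
    have := hSsa.conjugate_le_conjugate hvD
    rwa [hSDS] at this
  -- forward map maps into K
  have hmapsΦ : ∀ a : A, 0 ≤ a → a ≤ 1 →
      0 ≤ cfc (fun x : ℝ => x / (p * x + 1 - p))
          (S * (1 - Ring.inverse (1 + t * a * star t)) * S) ∧
      cfc (fun x : ℝ => x / (p * x + 1 - p))
          (S * (1 - Ring.inverse (1 + t * a * star t)) * S) ≤ 1 := by
    intro a ha0 ha1
    obtain ⟨hw0, hw1⟩ := hw_facts a ha0 ha1
    exact ⟨fA_nonneg' hp1 hw0 hw1, fA_le_one' hp1 hw0 hw1⟩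
  -- forward map is monotone
  have hmonoΦ : ∀ a b : A, 0 ≤ a → a ≤ 1 → 0 ≤ b → b ≤ 1 → a ≤ b →
      cfc (fun x : ℝ => x / (p * x + 1 - p))
          (S * (1 - Ring.inverse (1 + t * a * star t)) * S) ≤
      cfc (fun x : ℝ => x / (p * x + 1 - p))
          (S * (1 - Ring.inverse (1 + t * b * star t)) * S) := by
    intro a b ha0 ha1 hb0 hb1 hab
    obtain ⟨hwa0, hwa1⟩ := hw_facts a ha0 ha1
    obtain ⟨hwb0, hwb1⟩ := hw_facts b hb0 hb1
    apply fA_mono' hp1 hp.ne hwa0 hwa1 hwb0 hwb1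
    apply hSsa.conjugate_le_conjugate
    apply sub_le_sub_left
    apply ring_inverse_antitone' (hv_facts a ha0 ha1).2.2
      (zero_le_one.trans (le_add_of_nonneg_right (star_right_conjugate_nonneg ha0 t)))
    exact add_le_add_right (star_right_conjugate_le_conjugate hab t) 1
  -- the inverse map
  set g : ℝ → ℝ := fun x : ℝ => x / ((p / (p - 1)) * x + 1 - p / (p - 1)) with hgdef
  set Ψ : A → A := fun b =>
    ti * (Ring.inverse (1 - Si * cfc g b * Si) - 1) * star ti with hΨdef
  -- facts about Ψ
  have hm_facts : ∀ b : A, 0 ≤ b → b ≤ 1 → 0 ≤ cfc g b ∧ cfc g b ≤ 1 := by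
    intro b hb0 hb1
    exact ⟨fA_nonneg' hq1 hb0 hb1, fA_le_one' hq1 hb0 hb1⟩
  have he0_unit : IsUnit (Ring.inverse (1 + r)) := ring_inverse_isUnit' h1r_unit
  have he0_0 : (0:A) ≤ Ring.inverse (1 + r) := ring_inverse_nonneg' h1r_unit
    (zero_le_one.trans h1r1)
  have h1subD : (1:A) - D = Ring.inverse (1 + r) := by rw [hDdef, sub_sub_cancel]
  have hX_facts : ∀ m : A, 0 ≤ m → m ≤ 1 →
      Ring.inverse (1 + r) ≤ 1 - Si * m * Si ∧ IsUnit (1 - Si * m * Si) ∧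
      0 ≤ 1 - Si * m * Si ∧ 1 - Si * m * Si ≤ 1 := by
    intro m hm0 hm1
    have hn0 : 0 ≤ Si * m * Si := hSisa.conjugate_nonneg hm0
    have hnD : Si * m * Si ≤ D := by
      have := hSisa.conjugate_le_conjugate hm1
      rwa [mul_one, hSiSi] at this
    have hXe : Ring.inverse (1 + r) ≤ 1 - Si * m * Si := by
      rw [← h1subD]
      exact sub_le_sub_left hnD 1
    have hX_unit : IsUnit (1 - Si * m * Si) :=
      CStarAlgebra.isUnit_of_le _ hXe (he0_unit.isStrictlyPositive he0_0)
    exact ⟨hXe, hX_unit, he0_0.trans hXe, sub_le_self 1 hn0⟩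
  have hY_facts : ∀ m : A, 0 ≤ m → m ≤ 1 →
      0 ≤ Ring.inverse (1 - Si * m * Si) - 1 ∧ Ring.inverse (1 - Si * m * Si) - 1 ≤ r := by
    intro m hm0 hm1
    obtain ⟨hXe, hX_unit, hX0, hX1⟩ := hX_facts m hm0 hm1
    constructor
    · rw [sub_nonneg]
      have := ring_inverse_antitone' hX_unit hX0 hX1
      rwa [Ring.inverse_one] at this
    · rw [sub_le_iff_le_add']
      have := ring_inverse_antitone' he0_unit he0_0 hXe
      rwa [ring_inverse_inverse' h1r_unit] at this
  have hmapsΨ : ∀ b : A, 0 ≤ b → b ≤ 1 → 0 ≤ Ψ b ∧ Ψ b ≤ 1 := by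
    intro b hb0 hb1
    obtain ⟨hm0, hm1⟩ := hm_facts b hb0 hb1
    obtain ⟨hY0, hYr⟩ := hY_facts _ hm0 hm1
    constructor
    · exact star_right_conjugate_nonneg hY0 ti
    · calc Ψ b ≤ ti * r * star ti := star_right_conjugate_le_conjugate hYr ti
        _ = 1 := htirti
  have hmonoΨ : ∀ b₁ b₂ : A, 0 ≤ b₁ → b₁ ≤ 1 → 0 ≤ b₂ → b₂ ≤ 1 → b₁ ≤ b₂ → Ψ b₁ ≤ Ψ b₂ := by
    intro b₁ b₂ hb10 hb11 hb20 hb21 hb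
    obtain ⟨hm10, hm11⟩ := hm_facts b₁ hb10 hb11
    obtain ⟨hm20, hm21⟩ := hm_facts b₂ hb20 hb21
    have hmm : cfc g b₁ ≤ cfc g b₂ := fA_mono' hq1 hq0.ne' hb10 hb11 hb20 hb21 hb
    have hnn : Si * cfc g b₁ * Si ≤ Si * cfc g b₂ * Si := hSisa.conjugate_le_conjugate hmm
    have hXX : 1 - Si * cfc g b₂ * Si ≤ 1 - Si * cfc g b₁ * Si := sub_le_sub_left hnn 1
    obtain ⟨hXe2, hX_unit2, hX02, _⟩ := hX_facts _ hm20 hm21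
    have hII : Ring.inverse (1 - Si * cfc g b₁ * Si) ≤ Ring.inverse (1 - Si * cfc g b₂ * Si) :=
      ring_inverse_antitone' hX_unit2 hX02 hXX
    exact star_right_conjugate_le_conjugate (sub_le_sub_right hII 1) ti
  -- left inverse : Ψ (Φ a) = a
  have hleft : ∀ a : A, 0 ≤ a → a ≤ 1 →
      Ψ (cfc (fun x : ℝ => x / (p * x + 1 - p))
        (S * (1 - Ring.inverse (1 + t * a * star t)) * S)) = a := by
    intro a ha0 ha1
    obtain ⟨hw0, hw1⟩ := hw_facts a ha0 ha1
    obtain ⟨hv0, hvD, hu_unit⟩ := hv_facts a ha0 ha1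
    rw [hΨdef]
    simp only
    rw [hgdef, fA_comp' hp1 hw0 hw1]
    have hjug : Si * (S * (1 - Ring.inverse (1 + t * a * star t)) * S) * Si
        = 1 - Ring.inverse (1 + t * a * star t) := by
      calc Si * (S * (1 - Ring.inverse (1 + t * a * star t)) * S) * Si
          = (Si * S) * (1 - Ring.inverse (1 + t * a * star t)) * (S * Si) := by
            simp only [mul_assoc]
        _ = 1 - Ring.inverse (1 + t * a * star t) := by
            rw [hSiS, hSSi, one_mul, mul_one]
    rw [hjug, sub_sub_cancel, ring_inverse_inverse' hu_unit, add_sub_cancel_left]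
    calc ti * (t * a * star t) * star ti
        = (ti * t) * a * (star t * star ti) := by simp only [mul_assoc]
      _ = a := by rw [htit, hstar1, one_mul, mul_one]
  -- right inverse : Φ (Ψ b) = b
  have hright : ∀ b : A, 0 ≤ b → b ≤ 1 →
      cfc (fun x : ℝ => x / (p * x + 1 - p))
        (S * (1 - Ring.inverse (1 + t * Ψ b * star t)) * S) = b := by
    intro b hb0 hb1
    obtain ⟨hm0, hm1⟩ := hm_facts b hb0 hb1
    obtain ⟨hXe, hX_unit, hX0, hX1⟩ := hX_facts _ hm0 hm1
    have hconj : t * Ψ b * star t = Ring.inverse (1 - Si * cfc g b * Si) - 1 := by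
      rw [hΨdef]
      simp only
      calc t * (ti * (Ring.inverse (1 - Si * cfc g b * Si) - 1) * star ti) * star t
          = (t * ti) * (Ring.inverse (1 - Si * cfc g b * Si) - 1) * (star ti * star t) := by
            simp only [mul_assoc]
        _ = Ring.inverse (1 - Si * cfc g b * Si) - 1 := by
            rw [htti, hstar2, one_mul, mul_one]
    rw [hconj]
    have h1add : 1 + (Ring.inverse (1 - Si * cfc g b * Si) - 1)
        = Ring.inverse (1 - Si * cfc g b * Si) := by abel
    rw [h1add, ring_inverse_inverse' hX_unit, sub_sub_cancel]
    have hjug : S * (Si * cfc g b * Si) * S = cfc g b := by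
      calc S * (Si * cfc g b * Si) * S = (S * Si) * cfc g b * (Si * S) := by
            simp only [mul_assoc]
        _ = cfc g b := by rw [hSSi, hSiS, one_mul, mul_one]
    rw [hjug, hgdef]
    have h := fA_comp' (p := p / (p - 1)) hq1 hb0 hb1
    rw [hqq] at h
    exact h
  -- assemble
  have hKmem : ∀ a : A, a ∈ {a : A | IsSelfAdjoint a ∧ 0 ≤ a ∧ a ≤ 1} ↔ 0 ≤ a ∧ a ≤ 1 := by
    intro a
    constructor
    · rintro ⟨_, h0, h1⟩; exact ⟨h0, h1⟩
    · rintro ⟨h0, h1⟩; exact ⟨.of_nonneg h0, h0, h1⟩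
  have hMapsTo : Set.MapsTo (fun a : A =>
      cfc (fun x : ℝ => x / (p * x + 1 - p))
        (S * (1 - Ring.inverse (1 + t * a * star t)) * S))
      {a : A | IsSelfAdjoint a ∧ 0 ≤ a ∧ a ≤ 1} {a : A | IsSelfAdjoint a ∧ 0 ≤ a ∧ a ≤ 1} := by
    intro a ha
    obtain ⟨h0, h1⟩ := (hKmem a).mp ha
    exact (hKmem _).mpr (hmapsΦ a h0 h1)
  have hMapsToΨ : Set.MapsTo Ψ
      {a : A | IsSelfAdjoint a ∧ 0 ≤ a ∧ a ≤ 1} {a : A | IsSelfAdjoint a ∧ 0 ≤ a ∧ a ≤ 1} := by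
    intro b hb
    obtain ⟨h0, h1⟩ := (hKmem b).mp hb
    exact (hKmem _).mpr (hmapsΨ b h0 h1)
  constructor
  · have hInv : Set.InvOn Ψ (fun a : A =>
        cfc (fun x : ℝ => x / (p * x + 1 - p))
          (S * (1 - Ring.inverse (1 + t * a * star t)) * S))
        {a : A | IsSelfAdjoint a ∧ 0 ≤ a ∧ a ≤ 1} {a : A | IsSelfAdjoint a ∧ 0 ≤ a ∧ a ≤ 1} := by
      constructor
      · intro a ha
        obtain ⟨h0, h1⟩ := (hKmem a).mp ha
        exact hleft a h0 h1
      · intro b hb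
        obtain ⟨h0, h1⟩ := (hKmem b).mp hb
        exact hright b h0 h1
    exact hInv.bijOn hMapsTo hMapsToΨ
  · intro a ha b hb
    obtain ⟨ha0, ha1⟩ := (hKmem a).mp ha
    obtain ⟨hb0, hb1⟩ := (hKmem b).mp hb
    constructor
    · exact hmonoΦ a b ha0 ha1 hb0 hb1
    · intro h
      obtain ⟨hfa0, hfa1⟩ := hmapsΦ a ha0 ha1
      obtain ⟨hfb0, hfb1⟩ := hmapsΦ b hb0 hb1
      have := hmonoΨ _ _ hfa0 hfa1 hfb0 hfb1 h
      rwa [hleft a ha0 ha1, hleft b hb0 hb1] at this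

end Abstract

theorem stmt_14 {H : Type*} [NormedAddCommGroup H] [InnerProductSpace ℂ H] [CompleteSpace H]
    (p : ℝ) (hp : p < 0) (T : H →L[ℂ] H) (hT : IsUnit T) :
    Set.BijOn (fun A : H →L[ℂ] H =>
        fOp p (CFC.sqrt (1 + Ring.inverse (T * ContinuousLinearMap.adjoint T)) *
          (1 - Ring.inverse (1 + T * A * ContinuousLinearMap.adjoint T)) *
          CFC.sqrt (1 + Ring.inverse (T * ContinuousLinearMap.adjoint T))))
      {A : H →L[ℂ] H | IsSelfAdjoint A ∧ 0 ≤ A ∧ A ≤ 1} {A : H →L[ℂ] H | IsSelfAdjoint A ∧ 0 ≤ A ∧ A ≤ 1} ∧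
    ∀ A ∈ {A : H →L[ℂ] H | IsSelfAdjoint A ∧ 0 ≤ A ∧ A ≤ 1}, ∀ B ∈ {A : H →L[ℂ] H | IsSelfAdjoint A ∧ 0 ≤ A ∧ A ≤ 1},
      (A ≤ B ↔
        fOp p (CFC.sqrt (1 + Ring.inverse (T * ContinuousLinearMap.adjoint T)) *
          (1 - Ring.inverse (1 + T * A * ContinuousLinearMap.adjoint T)) *
          CFC.sqrt (1 + Ring.inverse (T * ContinuousLinearMap.adjoint T))) ≤
        fOp p (CFC.sqrt (1 + Ring.inverse (T * ContinuousLinearMap.adjoint T)) *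
          (1 - Ring.inverse (1 + T * B * ContinuousLinearMap.adjoint T)) *
          CFC.sqrt (1 + Ring.inverse (T * ContinuousLinearMap.adjoint T)))) := by
  have h := abstract_main (A := H →L[ℂ] H) p hp T hT
  simp only [ContinuousLinearMap.star_eq_adjoint] at h
  exact h
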